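/- Let p ≥ 2, q = p/(p−1), δ = q(q−1)/8 and n ∈ ℕ. There exists a constant C > 0 depending only on p such that for every κ ∈ (0,1) and every (ζ,η) ∈ ℝ × ℝⁿ the mollified Bellman function Q_κ = ψ_κ * Q satisfies |∂_ζ Q_κ(ζ,η)| ≤ C·max{(|ζ|+κ)^{p−1}, |η|+κ} and |∇_η Q_κ(ζ,η)| ≤ C·(|η|+κ)^{q−1}, where ∂_ζ Q_κ is the partial derivative in the first (scalar) variable and ∇_η Q_κ the gradient in the ℝⁿ variable. -/

import Mathlib

open Real MeasureTheory

/-- The Nazarov–Treil Bellman auxiliary function `β`. -/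
noncomputable def bell (p : ℝ) (u v : ℝ) : ℝ :=
  if u ^ p ≤ v ^ (p / (p - 1)) then
    u ^ p + v ^ (p / (p - 1)) +
      (p / (p - 1)) * (p / (p - 1) - 1) / 8 * (u ^ (2 : ℝ) * v ^ (2 - p / (p - 1)))
  else
    u ^ p + v ^ (p / (p - 1)) +
      (p / (p - 1)) * (p / (p - 1) - 1) / 8 *
        ((2 / p) * u ^ p + (2 / (p / (p - 1)) - 1) * v ^ (p / (p - 1)))

/-- The Nazarov–Treil Bellman function `Q(ζ,η) = (1/2) β(|ζ|,|η|)` on `ℝ × ℝⁿ`. -/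
noncomputable def bellQ (p : ℝ) (n : ℕ) (ξ : ℝ × EuclideanSpace ℝ (Fin n)) : ℝ :=
  (1 / 2) * bell p |ξ.1| ‖ξ.2‖

/-- The Euclidean norm on `ℝ × ℝⁿ ≅ ℝ^{n+1}`. -/
noncomputable def eNorm (n : ℕ) (x : ℝ × EuclideanSpace ℝ (Fin n)) : ℝ :=
  Real.sqrt (x.1 ^ 2 + ‖x.2‖ ^ 2)

/-- The mollifier `ψ(x) = c e^{-1/(1-|x|²)}` for `|x| < 1`, `ψ(x) = 0` otherwise,
where `|·|` is the Euclidean norm of `ℝ^{n+1} ≅ ℝ × ℝⁿ`. -/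
noncomputable def moll (n : ℕ) (c : ℝ) (x : ℝ × EuclideanSpace ℝ (Fin n)) : ℝ :=
  if eNorm n x < 1 then c * Real.exp (-(1 / (1 - eNorm n x ^ 2))) else 0

/-- The rescaled mollifier `ψ_κ(x) = κ^{-(n+1)} ψ(x/κ)`. -/
noncomputable def mollScaled (n : ℕ) (c κ : ℝ) (x : ℝ × EuclideanSpace ℝ (Fin n)) : ℝ :=
  (κ ^ (n + 1))⁻¹ * moll n c (κ⁻¹ • x)

/-- The mollified Bellman function `Q_κ = ψ_κ * Q` (convolution on `ℝ^{n+1} ≅ ℝ × ℝⁿ`). -/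
noncomputable def bellQκ (p : ℝ) (n : ℕ) (c κ : ℝ)
    (ξ : ℝ × EuclideanSpace ℝ (Fin n)) : ℝ :=
  ∫ y, mollScaled n c κ y * bellQ p n (ξ - y)

/-- The Hessian quadratic form `H_Φ(ω; x) = ⟨Hess Φ(ω) x, x⟩`, realised as the second
iterated Fréchet derivative evaluated at `(x, x)`. -/
noncomputable def hessQF {E : Type*} [NormedAddCommGroup E] [NormedSpace ℝ E]
    (Φ : E → ℝ) (ω : E) (x : E) : ℝ :=
  iteratedFDeriv ℝ 2 Φ ω ![x, x]



lemma bell_eq {p q δ : ℝ} (hq : q = p / (p - 1)) (hδ : δ = q * (q - 1) / 8) (u v : ℝ) :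
    bell p u v = if u ^ p ≤ v ^ q then u ^ p + v ^ q + δ * (u ^ (2:ℝ) * v ^ (2 - q))
      else u ^ p + v ^ q + δ * ((2 / p) * u ^ p + (2 / q - 1) * v ^ q) := by
  subst hδ; subst hq; rfl

lemma q_facts {p q : ℝ} (hp : 2 ≤ p) (hq : q = p / (p - 1)) :
    1 < q ∧ q ≤ 2 ∧ q / p = q - 1 ∧ 2 / p + 2 / q = 2 := by
  have h0 : (0:ℝ) < p - 1 := by linarith
  have h0' : (0:ℝ) < p := by linarith
  subst hq
  refine ⟨?_, ?_, ?_, ?_⟩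
  · rw [lt_div_iff₀ h0]; linarith
  · rw [div_le_iff₀ h0]; linarith
  · field_simp; ring
  · field_simp
    ring

lemma nn_le {r K : ℝ} (hK : 0 ≤ K) (h : |r| ≤ K) : ‖r‖₊ ≤ K.toNNReal := by
  rw [← NNReal.coe_le_coe, coe_nnnorm, Real.coe_toNNReal _ hK, Real.norm_eq_abs]; exact h

lemma lip_congr {f g : ℝ → ℝ} {s : Set ℝ} {K : NNReal} (hf : LipschitzOnWith K f s)
    (h : Set.EqOn f g s) : LipschitzOnWith K g s := fun x hx y hy => by
  rw [← h hx, ← h hy]; exact hf hx hy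

lemma lip_glue {f : ℝ → ℝ} {K : NNReal} {a b c' : ℝ} (hab : a ≤ b) (hbc : b ≤ c')
    (h1 : LipschitzOnWith K f (Set.Icc a b)) (h2 : LipschitzOnWith K f (Set.Icc b c')) :
    LipschitzOnWith K f (Set.Icc a c') := by
  have main : ∀ x ∈ Set.Icc a c', ∀ y ∈ Set.Icc a c', x ≤ y →
      dist (f x) (f y) ≤ K * dist x y := by
    intro x hx y hy hxy
    rcases le_total y b with h | h
    · exact h1.dist_le_mul x ⟨hx.1, hxy.trans h⟩ y ⟨hy.1, h⟩
    · rcases le_total b x with h' | h'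
      · exact h2.dist_le_mul x ⟨h', hx.2⟩ y ⟨h, hy.2⟩
      · calc dist (f x) (f y) ≤ dist (f x) (f b) + dist (f b) (f y) := dist_triangle _ _ _
          _ ≤ K * dist x b + K * dist b y :=
            add_le_add (h1.dist_le_mul x ⟨hx.1, h'⟩ b ⟨hab, le_rfl⟩)
              (h2.dist_le_mul b ⟨le_rfl, hbc⟩ y ⟨h, hy.2⟩)
          _ = K * (dist x b + dist b y) := (mul_add _ _ _).symm
          _ = K * dist x y := by
            rw [Real.dist_eq, Real.dist_eq, Real.dist_eq]
            congr 1
            rw [abs_of_nonpos (by linarith), abs_of_nonpos (by linarith),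
              abs_of_nonpos (by linarith)]
            ring
  apply LipschitzOnWith.of_dist_le_mul
  intro x hx y hy
  rcases le_total x y with h | h
  · exact main x hx y hy h
  · rw [dist_comm, dist_comm x y]; exact main y hy x hx h

lemma bell_boundary {p q u v : ℝ} (hp : 2 ≤ p) (hq : q = p / (p - 1))
    (hu : 0 ≤ u) (hv : 0 ≤ v) (huv : u ^ p = v ^ q) :
    u ^ (2:ℝ) * v ^ (2 - q) = (2 / p) * u ^ p + (2 / q - 1) * v ^ q := by
  obtain ⟨hq1, hq2, hqp, hpq⟩ := q_facts hp hq
  have hp0 : (0:ℝ) < p := by linarith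
  have hq0 : (0:ℝ) < q := by linarith
  rcases eq_or_lt_of_le hv with hv0 | hv0
  · have hvq : v ^ q = 0 := by rw [← hv0, Real.zero_rpow hq0.ne']
    have hu0 : u = 0 := by
      have := huv.trans hvq
      exact (Real.rpow_eq_zero hu hp0.ne').mp this
    rw [hu0, Real.zero_rpow two_ne_zero, Real.zero_rpow hp0.ne', hvq]
    ring
  · have hu0 : 0 < u := by
      rcases eq_or_lt_of_le hu with h | h
      · exfalso
        have : (0:ℝ) < v ^ q := Real.rpow_pos_of_pos hv0 q
        rw [← huv, ← h, Real.zero_rpow hp0.ne'] at this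
        linarith
      · exact h
    have hueq : u = v ^ (q / p) := by
      have h1 : (u ^ p) ^ (p⁻¹) = (v ^ q) ^ (p⁻¹) := by rw [huv]
      rw [← Real.rpow_mul hu, ← Real.rpow_mul hv, mul_inv_cancel₀ hp0.ne'] at h1
      rw [Real.rpow_one] at h1
      rw [h1, div_eq_mul_inv]
    have h2 : (q / p) * (2:ℝ) + (2 - q) = q := by rw [hqp]; ring
    have hconst : 2 / p + (2 / q - 1) = 1 := by linarith
    calc u ^ (2:ℝ) * v ^ (2 - q) = (v ^ (q/p)) ^ (2:ℝ) * v ^ (2 - q) := by rw [← hueq]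
      _ = v ^ ((q/p) * (2:ℝ)) * v ^ (2 - q) := by rw [← Real.rpow_mul hv]
      _ = v ^ ((q/p) * (2:ℝ) + (2 - q)) := (Real.rpow_add hv0 _ _).symm
      _ = v ^ q := by rw [h2]
      _ = (2 / p) * u ^ p + (2 / q - 1) * v ^ q := by rw [huv]; linear_combination (v ^ q) * hconst.symm

lemma u_le_of_mem {p q u v : ℝ} (hp : 2 ≤ p) (hq : q = p / (p - 1))
    (hu : 0 ≤ u) (hv : 0 ≤ v) (h : u ^ p ≤ v ^ q) : u ≤ v ^ (q / p) := by
  have hp0 : (0:ℝ) < p := by linarith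
  have h1 : u = (u ^ p) ^ (p⁻¹) := by
    rw [← Real.rpow_mul hu, mul_inv_cancel₀ hp0.ne', Real.rpow_one]
  rw [h1, div_eq_mul_inv, Real.rpow_mul hv]
  exact Real.rpow_le_rpow (Real.rpow_nonneg hu p) h (inv_nonneg.mpr hp0.le)

lemma key_uv {p q u v : ℝ} (hp : 2 ≤ p) (hq : q = p / (p - 1))
    (hu : 0 ≤ u) (hv : 0 ≤ v) (h : u ^ p ≤ v ^ q) : u * v ^ (2 - q) ≤ v := by
  obtain ⟨hq1, hq2, hqp, hpq⟩ := q_facts hp hq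
  rcases eq_or_lt_of_le hv with hv0 | hv0
  · have hp0 : (0:ℝ) < p := by linarith
    have hq0 : (0:ℝ) < q := by linarith
    have hvq : v ^ q = 0 := by rw [← hv0, Real.zero_rpow hq0.ne']
    have hu0 : u = 0 := by
      have h2 : u ^ p ≤ 0 := by rw [← hvq]; exact h
      have h3 : 0 ≤ u ^ p := Real.rpow_nonneg hu p
      exact (Real.rpow_eq_zero hu hp0.ne').mp (le_antisymm h2 h3)
    rw [hu0, zero_mul]; exact hv
  · have h1 : u ≤ v ^ (q / p) := u_le_of_mem hp hq hu hv h
    calc u * v ^ (2 - q) ≤ v ^ (q/p) * v ^ (2 - q) :=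
          mul_le_mul_of_nonneg_right h1 (Real.rpow_nonneg hv _)
      _ = v ^ (q/p + (2 - q)) := (Real.rpow_add hv0 _ _).symm
      _ = v ^ (1:ℝ) := by rw [hqp]; norm_num
      _ = v := Real.rpow_one v

lemma key_vv {p q u v : ℝ} (hp : 2 ≤ p) (hq : q = p / (p - 1))
    (hu : 0 ≤ u) (hv0 : 0 < v) (h : u ^ p ≤ v ^ q) :
    u ^ (2:ℝ) * v ^ (1 - q) ≤ v ^ (q - 1) := by
  obtain ⟨hq1, hq2, hqp, hpq⟩ := q_facts hp hq
  have h1 : u ≤ v ^ (q / p) := u_le_of_mem hp hq hu hv0.le h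
  have h2 : u ^ (2:ℝ) ≤ (v ^ (q/p)) ^ (2:ℝ) := Real.rpow_le_rpow hu h1 (by norm_num)
  calc u ^ (2:ℝ) * v ^ (1 - q) ≤ (v ^ (q/p)) ^ (2:ℝ) * v ^ (1 - q) :=
        mul_le_mul_of_nonneg_right h2 (Real.rpow_nonneg hv0.le _)
    _ = v ^ ((q/p) * (2:ℝ)) * v ^ (1 - q) := by rw [← Real.rpow_mul hv0.le]
    _ = v ^ ((q/p) * (2:ℝ) + (1 - q)) := (Real.rpow_add hv0 _ _).symm
    _ = v ^ (q - 1) := by rw [hqp]; ring_nf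

lemma bell_lip_u {p q δ v R : ℝ} (hp : 2 ≤ p) (hq : q = p / (p - 1)) (hδ : δ = q * (q - 1) / 8)
    (hv : 0 ≤ v) (hR : 0 ≤ R) :
    LipschitzOnWith (((p + 1) * (R ^ (p - 1) + v)).toNNReal)
      (fun u => bell p u v) (Set.Icc 0 R) := by
  obtain ⟨hq1, hq2, hqp, hpq⟩ := q_facts hp hq
  have hp0 : (0:ℝ) < p := by linarith
  have hp1 : (1:ℝ) ≤ p := by linarith
  have hδ0 : 0 ≤ δ := by rw [hδ]; nlinarith
  have hδ4 : δ ≤ 4⁻¹ := by rw [hδ]; nlinarith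
  have hR0 : 0 ≤ R ^ (p - 1) := Real.rpow_nonneg hR _
  set K : ℝ := (p + 1) * (R ^ (p - 1) + v) with hK
  have hK0 : 0 ≤ K := by positivity
  have branchA : ∀ b, 0 ≤ b → b ≤ R → (∀ u ∈ Set.Icc (0:ℝ) b, u ^ p ≤ v ^ q) →
      LipschitzOnWith K.toNNReal (fun u => bell p u v) (Set.Icc 0 b) := by
    intro b hb0 hbR hcond
    have hlip : LipschitzOnWith K.toNNReal
        (fun u => u ^ p + v ^ q + δ * (u ^ (2:ℝ) * v ^ (2 - q))) (Set.Icc 0 b) := by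
      apply (convex_Icc (0:ℝ) b).lipschitzOnWith_of_nnnorm_hasDerivWithin_le
        (f' := fun u => p * u ^ (p - 1) + δ * (2 * u ^ ((2:ℝ) - 1) * v ^ (2 - q)))
      · intro u _
        exact (((Real.hasDerivAt_rpow_const (Or.inr hp1)).add_const (v ^ q)).add
          (((Real.hasDerivAt_rpow_const (Or.inr one_le_two)).mul_const (v ^ (2 - q))).const_mul
            δ)).hasDerivWithinAt
      · intro u hu
        apply nn_le hK0
        have h21 : u ^ ((2:ℝ) - 1) = u := by norm_num
        rw [h21]
        have e1 : p * u ^ (p - 1) ≤ p * R ^ (p - 1) :=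
          mul_le_mul_of_nonneg_left
            (Real.rpow_le_rpow hu.1 (hu.2.trans hbR) (by linarith)) hp0.le
        have e2 : u * v ^ (2 - q) ≤ v := key_uv hp hq hu.1 hv (hcond u hu)
        have e3 : 0 ≤ u * v ^ (2 - q) := mul_nonneg hu.1 (Real.rpow_nonneg hv _)
        have e4 : 0 ≤ p * u ^ (p - 1) := mul_nonneg hp0.le (Real.rpow_nonneg hu.1 _)
        rw [abs_of_nonneg (by nlinarith)]
        nlinarith
    exact lip_congr hlip (fun u hu => by
      simp only [bell_eq hq hδ, if_pos (hcond u hu)])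
  have branchB : ∀ a, 0 ≤ a → a ≤ R → (∀ u ∈ Set.Icc a R, v ^ q ≤ u ^ p) →
      LipschitzOnWith K.toNNReal (fun u => bell p u v) (Set.Icc a R) := by
    intro a ha0 haR hcond
    have hlip : LipschitzOnWith K.toNNReal
        (fun u => u ^ p + v ^ q + δ * ((2 / p) * u ^ p + (2 / q - 1) * v ^ q))
        (Set.Icc a R) := by
      apply (convex_Icc a R).lipschitzOnWith_of_nnnorm_hasDerivWithin_le
        (f' := fun u => p * u ^ (p - 1) + δ * ((2 / p) * (p * u ^ (p - 1))))
      · intro u _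
        exact (((Real.hasDerivAt_rpow_const (Or.inr hp1)).add_const (v ^ q)).add
          ((((Real.hasDerivAt_rpow_const (Or.inr hp1)).const_mul (2 / p)).add_const
            ((2 / q - 1) * v ^ q)).const_mul δ)).hasDerivWithinAt
      · intro u hu
        apply nn_le hK0
        have hu0 : 0 ≤ u := ha0.trans hu.1
        have e1 : u ^ (p - 1) ≤ R ^ (p - 1) :=
          Real.rpow_le_rpow hu0 hu.2 (by linarith)
        have e4 : 0 ≤ u ^ (p - 1) := Real.rpow_nonneg hu0 _
        have key : p * u ^ (p - 1) + δ * ((2 / p) * (p * u ^ (p - 1)))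
            = (p + 2 * δ) * u ^ (p - 1) := by field_simp
        rw [key, abs_of_nonneg (by nlinarith)]
        nlinarith
    exact lip_congr hlip (fun u hu => by
      simp only [bell_eq hq hδ]
      by_cases h : u ^ p ≤ v ^ q
      · rw [if_pos h, ← bell_boundary hp hq (ha0.trans hu.1) hv (le_antisymm h (hcond u hu))]
      · rw [if_neg h])
  set u₀ : ℝ := v ^ (q / p) with hu₀
  have hu₀0 : 0 ≤ u₀ := Real.rpow_nonneg hv _
  have hu₀p : u₀ ^ p = v ^ q := by
    rw [hu₀, ← Real.rpow_mul hv, div_mul_cancel₀ q hp0.ne']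
  rcases le_total u₀ R with h | h
  · exact lip_glue hu₀0 h
      (branchA u₀ hu₀0 h (fun u hu => by
        rw [← hu₀p]; exact Real.rpow_le_rpow hu.1 hu.2 hp0.le))
      (branchB u₀ hu₀0 h (fun u hu => by
        rw [← hu₀p]; exact Real.rpow_le_rpow hu₀0 hu.1 hp0.le))
  · exact branchA R hR le_rfl (fun u hu => by
      rw [← hu₀p]; exact Real.rpow_le_rpow hu.1 (hu.2.trans h) hp0.le)

lemma bell_lip_v {p q δ u V : ℝ} (hp : 2 ≤ p) (hq : q = p / (p - 1)) (hδ : δ = q * (q - 1) / 8)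
    (hu : 0 ≤ u) (hV : 0 ≤ V) :
    LipschitzOnWith (((q + 1) * V ^ (q - 1)).toNNReal)
      (fun v => bell p u v) (Set.Icc 0 V) := by
  obtain ⟨hq1, hq2, hqp, hpq⟩ := q_facts hp hq
  have hp0 : (0:ℝ) < p := by linarith
  have hq0 : (0:ℝ) < q := by linarith
  have hq1' : (1:ℝ) ≤ q := hq1.le
  have hδ0 : 0 ≤ δ := by rw [hδ]; nlinarith
  have hδ4 : δ ≤ 4⁻¹ := by rw [hδ]; nlinarith
  have hV0 : 0 ≤ V ^ (q - 1) := Real.rpow_nonneg hV _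
  have h2q : 0 ≤ 2 / q - 1 := by
    rw [sub_nonneg, le_div_iff₀ hq0]; linarith
  set K : ℝ := (q + 1) * V ^ (q - 1) with hK
  have hK0 : 0 ≤ K := by positivity
  have branchB : ∀ b, 0 ≤ b → b ≤ V → (∀ v ∈ Set.Icc (0:ℝ) b, v ^ q ≤ u ^ p) →
      LipschitzOnWith K.toNNReal (fun v => bell p u v) (Set.Icc 0 b) := by
    intro b hb0 hbV hcond
    have hlip : LipschitzOnWith K.toNNReal
        (fun v => u ^ p + v ^ q + δ * ((2 / p) * u ^ p + (2 / q - 1) * v ^ q))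
        (Set.Icc 0 b) := by
      apply (convex_Icc (0:ℝ) b).lipschitzOnWith_of_nnnorm_hasDerivWithin_le
        (f' := fun v => q * v ^ (q - 1) + δ * ((2 / q - 1) * (q * v ^ (q - 1))))
      · intro v _
        exact (((Real.hasDerivAt_rpow_const (Or.inr hq1')).const_add (u ^ p)).add
          ((((Real.hasDerivAt_rpow_const (Or.inr hq1')).const_mul (2 / q - 1)).const_add
            ((2 / p) * u ^ p)).const_mul δ)).hasDerivWithinAt
      · intro v hv
        apply nn_le hK0
        have e1 : v ^ (q - 1) ≤ V ^ (q - 1) :=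
          Real.rpow_le_rpow hv.1 (hv.2.trans hbV) (by linarith)
        have e4 : 0 ≤ v ^ (q - 1) := Real.rpow_nonneg hv.1 _
        have key : q * v ^ (q - 1) + δ * ((2 / q - 1) * (q * v ^ (q - 1)))
            = (q + δ * (2 - q)) * v ^ (q - 1) := by field_simp
        rw [key, abs_of_nonneg (mul_nonneg (by nlinarith) e4)]
        exact mul_le_mul (by nlinarith) e1 e4 (by linarith)
    exact lip_congr hlip (fun v hv => by
      simp only [bell_eq hq hδ]
      by_cases h : u ^ p ≤ v ^ q
      · rw [if_pos h, ← bell_boundary hp hq hu hv.1 (le_antisymm h (hcond v hv))]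
      · rw [if_neg h])
  have branchA : ∀ a, 0 < a → a ≤ V → (∀ v ∈ Set.Icc a V, u ^ p ≤ v ^ q) →
      LipschitzOnWith K.toNNReal (fun v => bell p u v) (Set.Icc a V) := by
    intro a ha0 haV hcond
    have hlip : LipschitzOnWith K.toNNReal
        (fun v => u ^ p + v ^ q + δ * (u ^ (2:ℝ) * v ^ (2 - q))) (Set.Icc a V) := by
      apply (convex_Icc a V).lipschitzOnWith_of_nnnorm_hasDerivWithin_le
        (f' := fun v => q * v ^ (q - 1) + δ * (u ^ (2:ℝ) * ((2 - q) * v ^ (2 - q - 1))))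
      · intro v hv
        have hvne : v ≠ 0 := (ha0.trans_le hv.1).ne'
        exact (((Real.hasDerivAt_rpow_const (Or.inr hq1')).const_add (u ^ p)).add
          (((Real.hasDerivAt_rpow_const (Or.inl hvne)).const_mul (u ^ (2:ℝ))).const_mul
            δ)).hasDerivWithinAt
      · intro v hv
        apply nn_le hK0
        have hv0 : 0 < v := ha0.trans_le hv.1
        have e1 : v ^ (q - 1) ≤ V ^ (q - 1) :=
          Real.rpow_le_rpow hv0.le hv.2 (by linarith)
        have e4 : 0 ≤ v ^ (q - 1) := Real.rpow_nonneg hv0.le _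
        have h1q : (2:ℝ) - q - 1 = 1 - q := by ring
        rw [h1q]
        have e2 : u ^ (2:ℝ) * v ^ (1 - q) ≤ v ^ (q - 1) :=
          key_vv hp hq hu hv0 (hcond v hv)
        have e3 : 0 ≤ u ^ (2:ℝ) * v ^ (1 - q) :=
          mul_nonneg (Real.rpow_nonneg hu _) (Real.rpow_nonneg hv0.le _)
        have e5 : δ * (u ^ (2:ℝ) * ((2 - q) * v ^ (1 - q)))
            = (δ * (2 - q)) * (u ^ (2:ℝ) * v ^ (1 - q)) := by ring
        have t1 : δ * (2 - q) * (u ^ (2:ℝ) * v ^ (1 - q)) ≤ δ * (2 - q) * v ^ (q - 1) :=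
          mul_le_mul_of_nonneg_left e2 (mul_nonneg hδ0 (by linarith))
        have t2 : δ * (2 - q) * v ^ (q - 1) ≤ 1 * v ^ (q - 1) :=
          mul_le_mul_of_nonneg_right (by nlinarith) e4
        have t3 : q * v ^ (q - 1) ≤ q * V ^ (q - 1) := mul_le_mul_of_nonneg_left e1 hq0.le
        have n1 : 0 ≤ q * v ^ (q - 1) := mul_nonneg hq0.le e4
        have n2 : 0 ≤ δ * (2 - q) * (u ^ (2:ℝ) * v ^ (1 - q)) :=
          mul_nonneg (mul_nonneg hδ0 (by linarith)) e3
        rw [e5, abs_of_nonneg (by linarith)]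
        linarith
    exact lip_congr hlip (fun v hv => by
      simp only [bell_eq hq hδ, if_pos (hcond v hv)])
  rcases eq_or_lt_of_le hu with hu0 | hu0
  · have hlip : LipschitzOnWith K.toNNReal (fun v : ℝ => v ^ q) (Set.Icc 0 V) := by
      apply (convex_Icc (0:ℝ) V).lipschitzOnWith_of_nnnorm_hasDerivWithin_le
        (f' := fun v => q * v ^ (q - 1))
      · intro v _
        exact (Real.hasDerivAt_rpow_const (Or.inr hq1')).hasDerivWithinAt
      · intro v hv
        apply nn_le hK0
        have e1 : v ^ (q - 1) ≤ V ^ (q - 1) := Real.rpow_le_rpow hv.1 hv.2 (by linarith)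
        have e4 : 0 ≤ v ^ (q - 1) := Real.rpow_nonneg hv.1 _
        rw [abs_of_nonneg (by nlinarith)]
        nlinarith
    exact lip_congr hlip (fun v hv => by
      simp only [bell_eq hq hδ, ← hu0]
      rw [if_pos (by rw [Real.zero_rpow hp0.ne']; exact Real.rpow_nonneg hv.1 q),
        Real.zero_rpow hp0.ne', Real.zero_rpow two_ne_zero]
      ring)
  · set v₀ : ℝ := u ^ (p / q) with hv₀
    have hv₀0 : 0 < v₀ := Real.rpow_pos_of_pos hu0 _
    have hv₀q : v₀ ^ q = u ^ p := by
      rw [hv₀, ← Real.rpow_mul hu, div_mul_cancel₀ p hq0.ne']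
    rcases le_total v₀ V with h | h
    · exact lip_glue hv₀0.le h
        (branchB v₀ hv₀0.le h (fun v hv => by
          rw [← hv₀q]; exact Real.rpow_le_rpow hv.1 hv.2 hq0.le))
        (branchA v₀ hv₀0 h (fun v hv => by
          rw [← hv₀q]; exact Real.rpow_le_rpow hv₀0.le hv.1 hq0.le))
    · exact branchB V hV le_rfl (fun v hv => by
        rw [← hv₀q]; exact Real.rpow_le_rpow hv.1 (hv.2.trans h) hq0.le)






lemma bell_nonneg {p q δ : ℝ} (hp : 2 ≤ p) (hq : q = p / (p - 1)) (hδ : δ = q * (q - 1) / 8)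
    {u v : ℝ} (hu : 0 ≤ u) (hv : 0 ≤ v) : 0 ≤ bell p u v := by
  obtain ⟨hq1, hq2, hqp, hpq⟩ := q_facts hp hq
  have hq0 : (0:ℝ) < q := by linarith
  have hp0 : (0:ℝ) < p := by linarith
  have hδ0 : 0 ≤ δ := by rw [hδ]; nlinarith
  have h2q : 0 ≤ 2 / q - 1 := by rw [sub_nonneg, le_div_iff₀ hq0]; linarith
  have a1 : 0 ≤ u ^ p := Real.rpow_nonneg hu _
  have a2 : 0 ≤ v ^ q := Real.rpow_nonneg hv _
  have a3 : 0 ≤ u ^ (2:ℝ) := Real.rpow_nonneg hu _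
  have a4 : 0 ≤ v ^ (2 - q) := Real.rpow_nonneg hv _
  rw [bell_eq hq hδ]
  split_ifs with h
  · have := mul_nonneg hδ0 (mul_nonneg a3 a4); linarith
  · have h2p : (0:ℝ) ≤ 2 / p := by positivity
    have := mul_nonneg hδ0 (add_nonneg (mul_nonneg h2p a1) (mul_nonneg h2q a2))
    linarith

lemma bell_le {p q δ M : ℝ} (hp : 2 ≤ p) (hq : q = p / (p - 1)) (hδ : δ = q * (q - 1) / 8)
    {u v : ℝ} (hu0 : 0 ≤ u) (hv0 : 0 ≤ v) (hM : 1 ≤ M) (hu : u ≤ M) (hv : v ≤ M) :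
    bell p u v ≤ 3 * (M ^ p + M ^ q + M ^ (4:ℝ)) := by
  obtain ⟨hq1, hq2, hqp, hpq⟩ := q_facts hp hq
  have hq0 : (0:ℝ) < q := by linarith
  have hp0 : (0:ℝ) < p := by linarith
  have hM0 : (0:ℝ) < M := by linarith
  have hδ0 : 0 ≤ δ := by rw [hδ]; nlinarith
  have hδ4 : δ ≤ 4⁻¹ := by rw [hδ]; nlinarith
  have a1 : u ^ p ≤ M ^ p := Real.rpow_le_rpow hu0 hu hp0.le
  have a2 : v ^ q ≤ M ^ q := Real.rpow_le_rpow hv0 hv hq0.le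
  have a1' : 0 ≤ u ^ p := Real.rpow_nonneg hu0 _
  have a2' : 0 ≤ v ^ q := Real.rpow_nonneg hv0 _
  have aM1 : 0 ≤ M ^ p := Real.rpow_nonneg hM0.le _
  have aM2 : 0 ≤ M ^ q := Real.rpow_nonneg hM0.le _
  have aM4 : 0 ≤ M ^ (4:ℝ) := Real.rpow_nonneg hM0.le _
  rw [bell_eq hq hδ]
  split_ifs with h
  · have b1 : u ^ (2:ℝ) ≤ M ^ (2:ℝ) := Real.rpow_le_rpow hu0 hu (by norm_num)
    have b2 : v ^ (2 - q) ≤ M ^ (2 - q) := Real.rpow_le_rpow hv0 hv (by linarith)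
    have b3 : u ^ (2:ℝ) * v ^ (2 - q) ≤ M ^ (2:ℝ) * M ^ (2 - q) :=
      mul_le_mul b1 b2 (Real.rpow_nonneg hv0 _) (Real.rpow_nonneg hM0.le _)
    have b4 : M ^ (2:ℝ) * M ^ (2 - q) = M ^ ((2:ℝ) + (2 - q)) := (Real.rpow_add hM0 _ _).symm
    have b5 : M ^ ((2:ℝ) + (2 - q)) ≤ M ^ (4:ℝ) :=
      Real.rpow_le_rpow_of_exponent_le hM (by linarith)
    have b6 : δ * (u ^ (2:ℝ) * v ^ (2 - q)) ≤ 1 * M ^ (4:ℝ) := by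
      apply mul_le_mul (by linarith) _ (mul_nonneg (Real.rpow_nonneg hu0 _)
        (Real.rpow_nonneg hv0 _)) zero_le_one
      calc u ^ (2:ℝ) * v ^ (2 - q) ≤ M ^ (2:ℝ) * M ^ (2 - q) := b3
        _ = M ^ ((2:ℝ) + (2 - q)) := b4
        _ ≤ M ^ (4:ℝ) := b5
    linarith
  · have c1 : 2 / p ≤ 1 := by rw [div_le_one hp0]; linarith
    have c2 : 2 / q - 1 ≤ 1 := by
      have : 1 ≤ 2 / q ∧ 2 / q ≤ 2 := by
        constructor
        · rw [le_div_iff₀ hq0]; linarith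
        · rw [div_le_iff₀ hq0]; linarith
      linarith [this.2]
    have h2q : 0 ≤ 2 / q - 1 := by rw [sub_nonneg, le_div_iff₀ hq0]; linarith
    have d1 : (2 / p) * u ^ p ≤ 1 * M ^ p :=
      mul_le_mul c1 a1 a1' zero_le_one
    have d2 : (2 / q - 1) * v ^ q ≤ 1 * M ^ q := mul_le_mul c2 a2 a2' zero_le_one
    have d3 : δ * ((2 / p) * u ^ p + (2 / q - 1) * v ^ q) ≤ 1 * (1 * M ^ p + 1 * M ^ q) := by
      apply mul_le_mul (by linarith) (by linarith)
        (add_nonneg (mul_nonneg (by positivity) a1') (mul_nonneg h2q a2')) zero_le_one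
    linarith

lemma bellQ_meas (p : ℝ) (n : ℕ) : Measurable (bellQ p n) := by
  unfold bellQ bell
  apply Measurable.const_mul
  have m1 : Measurable fun x : ℝ × EuclideanSpace ℝ (Fin n) => |x.1| := measurable_fst.abs
  have m2 : Measurable fun x : ℝ × EuclideanSpace ℝ (Fin n) => ‖x.2‖ := measurable_snd.norm
  apply Measurable.ite
  · exact measurableSet_le (m1.pow measurable_const) (m2.pow measurable_const)
  · exact ((m1.pow measurable_const).add (m2.pow measurable_const)).add
      (((m1.pow measurable_const).mul (m2.pow measurable_const)).const_mul _)
  · exact ((m1.pow measurable_const).add (m2.pow measurable_const)).add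
      ((((m1.pow measurable_const).const_mul _).add
        ((m2.pow measurable_const).const_mul _)).const_mul _)

lemma eNorm_cont (n : ℕ) : Continuous (eNorm n) := by
  unfold eNorm
  exact Real.continuous_sqrt.comp (((continuous_fst.pow 2)).add (continuous_snd.norm.pow 2))

lemma eNorm_nonneg (n : ℕ) (x : ℝ × EuclideanSpace ℝ (Fin n)) : 0 ≤ eNorm n x :=
  Real.sqrt_nonneg _

lemma abs_fst_le_eNorm (n : ℕ) (x : ℝ × EuclideanSpace ℝ (Fin n)) : |x.1| ≤ eNorm n x := by
  rw [eNorm, ← Real.sqrt_sq_eq_abs]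
  exact Real.sqrt_le_sqrt (by nlinarith [sq_nonneg ‖x.2‖])

lemma norm_snd_le_eNorm (n : ℕ) (x : ℝ × EuclideanSpace ℝ (Fin n)) : ‖x.2‖ ≤ eNorm n x := by
  have h := Real.sqrt_le_sqrt (show ‖x.2‖ ^ 2 ≤ x.1 ^ 2 + ‖x.2‖ ^ 2 by nlinarith [sq_nonneg x.1])
  rwa [Real.sqrt_sq (norm_nonneg _)] at h

lemma moll_meas (n : ℕ) (c : ℝ) : Measurable (moll n c) := by
  unfold moll
  have hE : Measurable (eNorm n) := (eNorm_cont n).measurable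
  apply Measurable.ite
  · exact (isOpen_lt (eNorm_cont n) continuous_const).measurableSet
  · exact ((measurable_const.div (measurable_const.sub (hE.pow measurable_const))).neg.exp).const_mul c
  · exact measurable_const

lemma moll_nonneg (n : ℕ) {c : ℝ} (hc : 0 ≤ c) (x : ℝ × EuclideanSpace ℝ (Fin n)) :
    0 ≤ moll n c x := by
  unfold moll; split_ifs
  · exact mul_nonneg hc (Real.exp_pos _).le
  · exact le_rfl

lemma moll_le (n : ℕ) {c : ℝ} (hc : 0 ≤ c) (x : ℝ × EuclideanSpace ℝ (Fin n)) :
    moll n c x ≤ c := by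
  unfold moll; split_ifs with h
  · have h0 : 0 ≤ eNorm n x := eNorm_nonneg n x
    have h1 : 0 < 1 - eNorm n x ^ 2 := by nlinarith
    have h2 : Real.exp (-(1 / (1 - eNorm n x ^ 2))) ≤ 1 := by
      rw [Real.exp_le_one_iff]
      have : 0 ≤ 1 / (1 - eNorm n x ^ 2) := by positivity
      linarith
    calc c * Real.exp (-(1 / (1 - eNorm n x ^ 2))) ≤ c * 1 :=
          mul_le_mul_of_nonneg_left h2 hc
      _ = c := mul_one c
  · exact hc

instance prodHaar (n : ℕ) : (volume : Measure (ℝ × EuclideanSpace ℝ (Fin n))).IsAddHaarMeasure := by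
  rw [Measure.volume_eq_prod]; infer_instance

lemma finrank_prod_eucl (n : ℕ) : Module.finrank ℝ (ℝ × EuclideanSpace ℝ (Fin n)) = n + 1 := by
  simp [Module.finrank_prod]; ring

lemma mollScaled_meas (n : ℕ) (c κ : ℝ) : Measurable (mollScaled n c κ) := by
  unfold mollScaled
  exact ((moll_meas n c).comp (measurable_const_smul κ⁻¹)).const_mul _

lemma mollScaled_nonneg (n : ℕ) {c κ : ℝ} (hc : 0 ≤ c) (hκ : 0 < κ)
    (x : ℝ × EuclideanSpace ℝ (Fin n)) : 0 ≤ mollScaled n c κ x :=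
  mul_nonneg (inv_nonneg.mpr (pow_nonneg hκ.le _)) (moll_nonneg n hc _)

lemma mollScaled_le (n : ℕ) {c κ : ℝ} (hc : 0 ≤ c) (hκ : 0 < κ)
    (x : ℝ × EuclideanSpace ℝ (Fin n)) : mollScaled n c κ x ≤ (κ ^ (n + 1))⁻¹ * c :=
  mul_le_mul_of_nonneg_left (moll_le n hc _) (inv_nonneg.mpr (pow_nonneg hκ.le _))

lemma mollScaled_zero (n : ℕ) {c κ : ℝ} (hκ : 0 < κ)
    {y : ℝ × EuclideanSpace ℝ (Fin n)} (hy : κ < ‖y‖) : mollScaled n c κ y = 0 := by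
  unfold mollScaled
  have h1 : 1 ≤ eNorm n (κ⁻¹ • y) := by
    have hκ' : 0 < κ⁻¹ := inv_pos.mpr hκ
    rw [Prod.norm_def, lt_sup_iff] at hy
    rcases hy with h | h
    · have e : |(κ⁻¹ • y).1| = κ⁻¹ * |y.1| := by
        rw [Prod.smul_fst, smul_eq_mul, abs_mul, abs_of_pos hκ']
      have h2 : (1:ℝ) < κ⁻¹ * |y.1| := by
        calc (1:ℝ) = κ⁻¹ * κ := (inv_mul_cancel₀ hκ.ne').symm
          _ < κ⁻¹ * |y.1| := by
            rw [Real.norm_eq_abs] at h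
            exact mul_lt_mul_of_pos_left h hκ'
      linarith [abs_fst_le_eNorm n (κ⁻¹ • y), e ▸ h2]
    · have e : ‖(κ⁻¹ • y).2‖ = κ⁻¹ * ‖y.2‖ := by
        rw [Prod.smul_snd, norm_smul, Real.norm_eq_abs, abs_of_pos hκ']
      have h2 : (1:ℝ) < κ⁻¹ * ‖y.2‖ := by
        calc (1:ℝ) = κ⁻¹ * κ := (inv_mul_cancel₀ hκ.ne').symm
          _ < κ⁻¹ * ‖y.2‖ := mul_lt_mul_of_pos_left h hκ'
      linarith [norm_snd_le_eNorm n (κ⁻¹ • y), e ▸ h2]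
  rw [moll, if_neg (not_lt.mpr h1), mul_zero]

lemma mollScaled_integrable (n : ℕ) {c κ : ℝ} (hc : 0 ≤ c) (hκ : 0 < κ) :
    Integrable (mollScaled n c κ) := by
  apply Integrable.mono'
    (g := (Metric.closedBall (0 : ℝ × EuclideanSpace ℝ (Fin n)) κ).indicator
      (fun _ => (κ ^ (n + 1))⁻¹ * c))
  · rw [integrable_indicator_iff measurableSet_closedBall]
    exact integrableOn_const measure_closedBall_lt_top.ne
  · exact (mollScaled_meas n c κ).aestronglyMeasurable
  · apply Filter.Eventually.of_forall
    intro y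
    by_cases hy : y ∈ Metric.closedBall (0 : ℝ × EuclideanSpace ℝ (Fin n)) κ
    · rw [Set.indicator_of_mem hy, Real.norm_eq_abs,
        abs_of_nonneg (mollScaled_nonneg n hc hκ y)]
      exact mollScaled_le n hc hκ y
    · rw [Set.indicator_of_notMem hy, mollScaled_zero n hκ]
      · simp
      · rw [Metric.mem_closedBall, dist_zero_right] at hy
        exact not_le.mp hy

lemma mollScaled_integral (n : ℕ) {c κ : ℝ} (hκ : 0 < κ)
    (hnorm : ∫ x : ℝ × EuclideanSpace ℝ (Fin n), moll n c x = 1) :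
    ∫ y, mollScaled n c κ y = 1 := by
  unfold mollScaled
  rw [MeasureTheory.integral_const_mul,
    Measure.integral_comp_inv_smul_of_nonneg volume (moll n c) hκ.le,
    finrank_prod_eucl, hnorm, smul_eq_mul, mul_one, inv_mul_cancel₀ (pow_ne_zero _ hκ.ne')]

lemma integrand_integrable {p q δ : ℝ} (hp : 2 ≤ p) (hq : q = p / (p - 1))
    (hδ : δ = q * (q - 1) / 8) (n : ℕ) {c κ : ℝ} (hc : 0 ≤ c) (hκ : 0 < κ) (hκ1 : κ < 1)
    (ξ : ℝ × EuclideanSpace ℝ (Fin n)) :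
    Integrable (fun y => mollScaled n c κ y * bellQ p n (ξ - y)) := by
  set M : ℝ := ‖ξ‖ + 1 with hM
  have hM1 : 1 ≤ M := by have := norm_nonneg ξ; linarith
  set B : ℝ := 3 * (M ^ p + M ^ q + M ^ (4:ℝ)) with hB
  have hB0 : 0 ≤ B := by
    have h1 : (0:ℝ) < M := by linarith
    have := Real.rpow_nonneg h1.le p
    have := Real.rpow_nonneg h1.le q
    have := Real.rpow_nonneg h1.le (4:ℝ)
    rw [hB]; linarith
  apply Integrable.mono'
    (g := (Metric.closedBall (0 : ℝ × EuclideanSpace ℝ (Fin n)) κ).indicator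
      (fun _ => (κ ^ (n + 1))⁻¹ * c * B))
  · rw [integrable_indicator_iff measurableSet_closedBall]
    exact integrableOn_const measure_closedBall_lt_top.ne
  · exact ((mollScaled_meas n c κ).mul
      ((bellQ_meas p n).comp (measurable_const.sub measurable_id))).aestronglyMeasurable
  · apply Filter.Eventually.of_forall
    intro y
    by_cases hy : y ∈ Metric.closedBall (0 : ℝ × EuclideanSpace ℝ (Fin n)) κ
    · rw [Set.indicator_of_mem hy]
      rw [Metric.mem_closedBall, dist_zero_right] at hy
      have hQ : |bellQ p n (ξ - y)| ≤ B := by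
        unfold bellQ
        have hb1 : |(ξ - y).1| ≤ M := by
          have e1 : |(ξ - y).1| = |ξ.1 - y.1| := by rw [Prod.fst_sub]
          have e2 : |ξ.1 - y.1| ≤ |ξ.1| + |y.1| := abs_sub _ _
          have e3 : |ξ.1| ≤ ‖ξ‖ := by rw [← Real.norm_eq_abs]; exact norm_fst_le ξ
          have e4 : |y.1| ≤ ‖y‖ := by rw [← Real.norm_eq_abs]; exact norm_fst_le y
          rw [e1]; rw [hM]; linarith
        have hb2 : ‖(ξ - y).2‖ ≤ M := by
          have e1 : (ξ - y).2 = ξ.2 - y.2 := by rw [Prod.snd_sub]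
          have e2 : ‖ξ.2 - y.2‖ ≤ ‖ξ.2‖ + ‖y.2‖ := norm_sub_le _ _
          have e3 : ‖ξ.2‖ ≤ ‖ξ‖ := norm_snd_le ξ
          have e4 : ‖y.2‖ ≤ ‖y‖ := norm_snd_le y
          rw [e1, hM]; linarith
        have hbell := bell_le hp hq hδ (abs_nonneg (ξ - y).1) (norm_nonneg (ξ - y).2)
          hM1 hb1 hb2
        have hbell0 := bell_nonneg hp hq hδ (abs_nonneg (ξ - y).1) (norm_nonneg (ξ - y).2)
        rw [abs_mul, abs_of_nonneg hbell0]
        calc |1/2| * bell p |(ξ - y).1| ‖(ξ - y).2‖ ≤ 1 * B := by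
              apply mul_le_mul _ hbell hbell0 zero_le_one
              rw [abs_of_nonneg]; norm_num; norm_num
          _ = B := one_mul B
      rw [Real.norm_eq_abs, abs_mul]
      apply mul_le_mul _ hQ (abs_nonneg _)
        (mul_nonneg (inv_nonneg.mpr (pow_nonneg hκ.le _)) hc)
      rw [abs_of_nonneg (mollScaled_nonneg n hc hκ y)]
      exact mollScaled_le n hc hκ y
    · rw [Set.indicator_of_notMem hy, mollScaled_zero n hκ, zero_mul]
      · simp
      · rw [Metric.mem_closedBall, dist_zero_right] at hy
        exact not_le.mp hy

lemma diff_bound_u {p q δ : ℝ} (hp : 2 ≤ p) (hq : q = p / (p - 1))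
    (hδ : δ = q * (q - 1) / 8) (n : ℕ) {c κ : ℝ} (hc : 0 ≤ c) (hκ : 0 < κ) (hκ1 : κ < 1)
    (hnorm : ∫ x : ℝ × EuclideanSpace ℝ (Fin n), moll n c x = 1)
    (ζ : ℝ) (η : EuclideanSpace ℝ (Fin n)) (z : ℝ) (hz : |z - ζ| ≤ κ) :
    |bellQκ p n c κ (z, η) - bellQκ p n c κ (ζ, η)| ≤
      ((p + 1) * ((|ζ| + 2 * κ) ^ (p - 1) + (‖η‖ + κ))) * |z - ζ| := by
  set R : ℝ := |ζ| + 2 * κ with hR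
  have hR0 : 0 ≤ R := by have := abs_nonneg ζ; rw [hR]; linarith
  set K0 : ℝ := (p + 1) * (R ^ (p - 1) + (‖η‖ + κ)) with hK0def
  have hRp : 0 ≤ R ^ (p - 1) := Real.rpow_nonneg hR0 _
  have hK00 : 0 ≤ K0 := by
    have := norm_nonneg η
    rw [hK0def]; positivity
  have h1 := integrand_integrable hp hq hδ n hc hκ hκ1 (z, η)
  have h2 := integrand_integrable hp hq hδ n hc hκ hκ1 (ζ, η)
  have heq : bellQκ p n c κ (z, η) - bellQκ p n c κ (ζ, η) =
      ∫ y, mollScaled n c κ y *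
        (bellQ p n ((z, η) - y) - bellQ p n ((ζ, η) - y)) := by
    unfold bellQκ
    rw [← integral_sub h1 h2]
    congr 1; funext y; ring
  rw [← Real.norm_eq_abs, heq]
  have hbound : ∀ y, ‖mollScaled n c κ y *
      (bellQ p n ((z, η) - y) - bellQ p n ((ζ, η) - y))‖ ≤
      mollScaled n c κ y * (K0 * |z - ζ|) := by
    intro y
    by_cases hy : mollScaled n c κ y = 0
    · rw [hy, zero_mul, zero_mul, norm_zero]
    · have hyb : ‖y‖ ≤ κ := by
        by_contra hcon
        exact hy (mollScaled_zero n hκ (not_le.mp hcon))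
      have hy1 : |y.1| ≤ κ := by
        have := norm_fst_le y; rw [Real.norm_eq_abs] at this; linarith
      have hy2 : ‖y.2‖ ≤ κ := le_trans (norm_snd_le y) hyb
      set v : ℝ := ‖η - y.2‖ with hv
      have hv0 : 0 ≤ v := norm_nonneg _
      have hvle : v ≤ ‖η‖ + κ := by
        rw [hv]; refine le_trans (norm_sub_le _ _) (by linarith)
      have hlip := bell_lip_u hp hq hδ (v := v) hv0 hR0
      have ha1 : |z - y.1| ∈ Set.Icc (0:ℝ) R := by
        constructor
        · exact abs_nonneg _
        · have : |z - y.1| = |(z - ζ) + (ζ - y.1)| := by ring_nf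
          rw [this]
          refine le_trans (abs_add_le _ _) ?_
          have := abs_sub ζ y.1
          have h3 := abs_sub_abs_le_abs_sub ζ y.1
          have h4 : |ζ - y.1| ≤ |ζ| + |y.1| := abs_sub _ _
          rw [hR]; linarith
      have ha2 : |ζ - y.1| ∈ Set.Icc (0:ℝ) R := by
        constructor
        · exact abs_nonneg _
        · have h4 : |ζ - y.1| ≤ |ζ| + |y.1| := abs_sub _ _
          rw [hR]; linarith
      have hd := hlip.dist_le_mul _ ha1 _ ha2
      rw [Real.dist_eq, Real.dist_eq] at hd
      have hcoe : (((p + 1) * (R ^ (p - 1) + v)).toNNReal : ℝ) = (p + 1) * (R ^ (p - 1) + v) := by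
        rw [Real.coe_toNNReal]
        positivity
      rw [hcoe] at hd
      have hd2 : abs (|z - y.1| - |ζ - y.1|) ≤ |z - ζ| := by
        have := abs_abs_sub_abs_le_abs_sub (z - y.1) (ζ - y.1)
        have he : (z - y.1) - (ζ - y.1) = z - ζ := by ring
        rw [he] at this; exact this
      have hKv : (p + 1) * (R ^ (p - 1) + v) ≤ K0 := by
        rw [hK0def]
        apply mul_le_mul_of_nonneg_left _ (by linarith : (0:ℝ) ≤ p + 1)
        linarith
      have hbell : |bell p |z - y.1| v - bell p |ζ - y.1| v| ≤ K0 * |z - ζ| := by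
        calc |bell p |z - y.1| v - bell p |ζ - y.1| v| ≤
              (p + 1) * (R ^ (p - 1) + v) * abs (|z - y.1| - |ζ - y.1|) := hd
          _ ≤ K0 * |z - ζ| := by
              apply mul_le_mul hKv hd2 (abs_nonneg _) hK00
      have hQdiff : bellQ p n ((z, η) - y) - bellQ p n ((ζ, η) - y) =
          (1/2) * (bell p |z - y.1| v - bell p |ζ - y.1| v) := by
        unfold bellQ
        have e1 : ((z, η) - y).1 = z - y.1 := rfl
        have e2 : ((z, η) - y).2 = η - y.2 := rfl
        have e3 : ((ζ, η) - y).1 = ζ - y.1 := rfl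
        have e4 : ((ζ, η) - y).2 = η - y.2 := rfl
        rw [e1, e2, e3, e4, hv]; ring
      rw [norm_mul, Real.norm_eq_abs, Real.norm_eq_abs,
        abs_of_nonneg (mollScaled_nonneg n hc hκ y), hQdiff]
      apply mul_le_mul_of_nonneg_left _ (mollScaled_nonneg n hc hκ y)
      rw [abs_mul]
      have h12 : |(1:ℝ)/2| = 1/2 := by norm_num
      rw [h12]
      linarith [hbell, abs_nonneg (bell p |z - y.1| v - bell p |ζ - y.1| v)]
  calc ‖∫ y, mollScaled n c κ y *
        (bellQ p n ((z, η) - y) - bellQ p n ((ζ, η) - y))‖ ≤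
      ∫ y, mollScaled n c κ y * (K0 * |z - ζ|) :=
        norm_integral_le_of_norm_le ((mollScaled_integrable n hc hκ).mul_const _)
          (Filter.Eventually.of_forall hbound)
    _ = (∫ y, mollScaled n c κ y) * (K0 * |z - ζ|) := integral_mul_const _ _
    _ = K0 * |z - ζ| := by rw [mollScaled_integral n hκ hnorm, one_mul]

lemma diff_bound_v {p q δ : ℝ} (hp : 2 ≤ p) (hq : q = p / (p - 1))
    (hδ : δ = q * (q - 1) / 8) (n : ℕ) {c κ : ℝ} (hc : 0 ≤ c) (hκ : 0 < κ) (hκ1 : κ < 1)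
    (hnorm : ∫ x : ℝ × EuclideanSpace ℝ (Fin n), moll n c x = 1)
    (ζ : ℝ) (η : EuclideanSpace ℝ (Fin n)) (w : EuclideanSpace ℝ (Fin n))
    (hw : ‖w - η‖ ≤ κ) :
    |bellQκ p n c κ (ζ, w) - bellQκ p n c κ (ζ, η)| ≤
      ((q + 1) * (‖η‖ + 2 * κ) ^ (q - 1)) * ‖w - η‖ := by
  obtain ⟨hq1, hq2, hqp, hpq⟩ := q_facts hp hq
  set V : ℝ := ‖η‖ + 2 * κ with hV
  have hV0 : 0 ≤ V := by have := norm_nonneg η; rw [hV]; linarith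
  set K1 : ℝ := (q + 1) * V ^ (q - 1) with hK1def
  have hVq : 0 ≤ V ^ (q - 1) := Real.rpow_nonneg hV0 _
  have hK10 : 0 ≤ K1 := by rw [hK1def]; positivity
  have h1 := integrand_integrable hp hq hδ n hc hκ hκ1 (ζ, w)
  have h2 := integrand_integrable hp hq hδ n hc hκ hκ1 (ζ, η)
  have heq : bellQκ p n c κ (ζ, w) - bellQκ p n c κ (ζ, η) =
      ∫ y, mollScaled n c κ y *
        (bellQ p n ((ζ, w) - y) - bellQ p n ((ζ, η) - y)) := by
    unfold bellQκ
    rw [← integral_sub h1 h2]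
    congr 1; funext y; ring
  rw [← Real.norm_eq_abs, heq]
  have hbound : ∀ y, ‖mollScaled n c κ y *
      (bellQ p n ((ζ, w) - y) - bellQ p n ((ζ, η) - y))‖ ≤
      mollScaled n c κ y * (K1 * ‖w - η‖) := by
    intro y
    by_cases hy : mollScaled n c κ y = 0
    · rw [hy, zero_mul, zero_mul, norm_zero]
    · have hyb : ‖y‖ ≤ κ := by
        by_contra hcon
        exact hy (mollScaled_zero n hκ (not_le.mp hcon))
      have hy2 : ‖y.2‖ ≤ κ := le_trans (norm_snd_le y) hyb
      set u : ℝ := |ζ - y.1| with hu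
      have hu0 : 0 ≤ u := abs_nonneg _
      have hlip := bell_lip_v hp hq hδ (u := u) hu0 hV0
      have ha1 : ‖w - y.2‖ ∈ Set.Icc (0:ℝ) V := by
        constructor
        · exact norm_nonneg _
        · have e : w - y.2 = (w - η) + (η - y.2) := by abel
          rw [e, hV]
          refine le_trans (norm_add_le _ _) ?_
          have := norm_sub_le η y.2
          linarith
      have ha2 : ‖η - y.2‖ ∈ Set.Icc (0:ℝ) V := by
        constructor
        · exact norm_nonneg _
        · have := norm_sub_le η y.2
          rw [hV]; linarith
      have hd := hlip.dist_le_mul _ ha1 _ ha2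
      rw [Real.dist_eq] at hd
      have hcoe : (((q + 1) * V ^ (q - 1)).toNNReal : ℝ) = (q + 1) * V ^ (q - 1) := by
        rw [Real.coe_toNNReal]
        positivity
      rw [hcoe] at hd
      have hd2 : |‖w - y.2‖ - ‖η - y.2‖| ≤ ‖w - η‖ := by
        have h3 := abs_norm_sub_norm_le (w - y.2) (η - y.2)
        have he : (w - y.2) - (η - y.2) = w - η := by abel
        rw [he] at h3; exact h3
      have hbell : |bell p u ‖w - y.2‖ - bell p u ‖η - y.2‖| ≤ K1 * ‖w - η‖ := by
        calc |bell p u ‖w - y.2‖ - bell p u ‖η - y.2‖| ≤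
              (q + 1) * V ^ (q - 1) * |‖w - y.2‖ - ‖η - y.2‖| := hd
          _ ≤ K1 * ‖w - η‖ := by
              rw [hK1def]
              apply mul_le_mul le_rfl hd2 (abs_nonneg _) (by positivity)
      have hQdiff : bellQ p n ((ζ, w) - y) - bellQ p n ((ζ, η) - y) =
          (1/2) * (bell p u ‖w - y.2‖ - bell p u ‖η - y.2‖) := by
        unfold bellQ
        have e1 : ((ζ, w) - y).1 = ζ - y.1 := rfl
        have e2 : ((ζ, w) - y).2 = w - y.2 := rfl
        have e3 : ((ζ, η) - y).1 = ζ - y.1 := rfl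
        have e4 : ((ζ, η) - y).2 = η - y.2 := rfl
        rw [e1, e2, e3, e4, hu]
        ring
      rw [norm_mul, Real.norm_eq_abs, Real.norm_eq_abs,
        abs_of_nonneg (mollScaled_nonneg n hc hκ y), hQdiff]
      apply mul_le_mul_of_nonneg_left _ (mollScaled_nonneg n hc hκ y)
      rw [abs_mul]
      have h12 : |(1:ℝ)/2| = 1/2 := by norm_num
      rw [h12]
      linarith [hbell, abs_nonneg (bell p u ‖w - y.2‖ - bell p u ‖η - y.2‖)]
  calc ‖∫ y, mollScaled n c κ y *
        (bellQ p n ((ζ, w) - y) - bellQ p n ((ζ, η) - y))‖ ≤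
      ∫ y, mollScaled n c κ y * (K1 * ‖w - η‖) :=
        norm_integral_le_of_norm_le ((mollScaled_integrable n hc hκ).mul_const _)
          (Filter.Eventually.of_forall hbound)
    _ = (∫ y, mollScaled n c κ y) * (K1 * ‖w - η‖) := integral_mul_const _ _
    _ = K1 * ‖w - η‖ := by rw [mollScaled_integral n hκ hnorm, one_mul]

/-- For `p ≥ 2`, `q = p/(p-1)`: there is `C = C(p) > 0` such that for
every `κ ∈ (0,1)` and every `(ζ,η) ∈ ℝ × ℝⁿ`, the mollified Bellman function satisfies
`|∂_ζ Q_κ(ζ,η)| ≤ C max{(|ζ|+κ)^{p-1}, |η|+κ}` and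
`|∇_η Q_κ(ζ,η)| ≤ C (|η|+κ)^{q-1}`. -/
theorem bellQκ_deriv_bounds (p q δ : ℝ) (hp : 2 ≤ p) (hq : q = p / (p - 1))
    (hδ : δ = q * (q - 1) / 8) (n : ℕ) (c : ℝ) (hc : 0 < c)
    (hnorm : ∫ x : ℝ × EuclideanSpace ℝ (Fin n), moll n c x = 1) :
    ∃ C > 0, ∀ κ ∈ Set.Ioo (0 : ℝ) 1, ∀ (ζ : ℝ) (η : EuclideanSpace ℝ (Fin n)),
      |deriv (fun z => bellQκ p n c κ (z, η)) ζ| ≤ C * max ((|ζ| + κ) ^ (p - 1)) (‖η‖ + κ) ∧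
      ‖fderiv ℝ (fun y => bellQκ p n c κ (ζ, y)) η‖ ≤ C * (‖η‖ + κ) ^ (q - 1) := by
  obtain ⟨hq1, hq2, hqp, hpq⟩ := q_facts hp hq
  have h2p : (0:ℝ) ≤ (2:ℝ) ^ p := Real.rpow_nonneg (by norm_num) _
  refine ⟨(p + q + 2) * ((2:ℝ) ^ p + 2), by nlinarith, ?_⟩
  intro κ hκmem ζ η
  obtain ⟨hκ, hκ1⟩ := hκmem
  set C : ℝ := (p + q + 2) * ((2:ℝ) ^ p + 2) with hC
  have hζ0 : (0:ℝ) ≤ |ζ| := abs_nonneg ζ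
  have hη0 : (0:ℝ) ≤ ‖η‖ := norm_nonneg η
  have hm0 : (0:ℝ) ≤ max ((|ζ| + κ) ^ (p - 1)) (‖η‖ + κ) :=
    le_max_of_le_right (by linarith)
  constructor
  · -- ζ-derivative
    set K0 : ℝ := (p + 1) * ((|ζ| + 2 * κ) ^ (p - 1) + (‖η‖ + κ)) with hK0def
    have hK00 : 0 ≤ K0 := by
      have := Real.rpow_nonneg (show (0:ℝ) ≤ |ζ| + 2*κ by linarith) (p - 1)
      rw [hK0def]; positivity
    have hfd : ‖fderiv ℝ (fun z => bellQκ p n c κ (z, η)) ζ‖ ≤ K0 := by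
      apply norm_fderiv_le_of_lip' ℝ hK00
      filter_upwards [Metric.closedBall_mem_nhds ζ hκ] with z hz
      rw [Metric.mem_closedBall, Real.dist_eq] at hz
      rw [Real.norm_eq_abs, Real.norm_eq_abs]
      exact diff_bound_u hp hq hδ n hc.le hκ hκ1 hnorm ζ η z hz
    have hd : |deriv (fun z => bellQκ p n c κ (z, η)) ζ| ≤
        ‖fderiv ℝ (fun z => bellQκ p n c κ (z, η)) ζ‖ := by
      rw [← fderiv_apply_one_eq_deriv, ← Real.norm_eq_abs]
      calc ‖fderiv ℝ (fun z => bellQκ p n c κ (z, η)) ζ 1‖ ≤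
            ‖fderiv ℝ (fun z => bellQκ p n c κ (z, η)) ζ‖ * ‖(1:ℝ)‖ :=
          (fderiv ℝ _ ζ).le_opNorm 1
        _ = ‖fderiv ℝ (fun z => bellQκ p n c κ (z, η)) ζ‖ := by simp
    have hKC : K0 ≤ C * max ((|ζ| + κ) ^ (p - 1)) (‖η‖ + κ) := by
      set m : ℝ := max ((|ζ| + κ) ^ (p - 1)) (‖η‖ + κ) with hm
      have hm1 : (|ζ| + κ) ^ (p - 1) ≤ m := le_max_left _ _
      have hm2 : ‖η‖ + κ ≤ m := le_max_right _ _
      have b1 : (|ζ| + 2 * κ) ^ (p - 1) ≤ (2:ℝ) ^ (p - 1) * (|ζ| + κ) ^ (p - 1) := by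
        have e1 : |ζ| + 2 * κ ≤ 2 * (|ζ| + κ) := by linarith
        calc (|ζ| + 2 * κ) ^ (p - 1) ≤ (2 * (|ζ| + κ)) ^ (p - 1) :=
              Real.rpow_le_rpow (by linarith) e1 (by linarith)
          _ = (2:ℝ) ^ (p - 1) * (|ζ| + κ) ^ (p - 1) :=
              Real.mul_rpow (by norm_num) (by linarith)
      have b2 : (2:ℝ) ^ (p - 1) ≤ (2:ℝ) ^ p :=
        Real.rpow_le_rpow_of_exponent_le one_le_two (by linarith)
      have b3 : (0:ℝ) ≤ (2:ℝ) ^ (p - 1) := Real.rpow_nonneg (by norm_num) _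
      have hzk : (0:ℝ) ≤ (|ζ| + κ) ^ (p - 1) :=
        Real.rpow_nonneg (by linarith) _
      have step1 : K0 ≤ (p + 1) * ((2:ℝ) ^ (p - 1) * m + m) := by
        rw [hK0def]
        apply mul_le_mul_of_nonneg_left _ (by linarith : (0:ℝ) ≤ p + 1)
        have : (|ζ| + 2*κ) ^ (p - 1) ≤ (2:ℝ) ^ (p - 1) * m := by
          calc (|ζ| + 2*κ) ^ (p - 1) ≤ (2:ℝ) ^ (p - 1) * (|ζ| + κ) ^ (p - 1) := b1
            _ ≤ (2:ℝ) ^ (p - 1) * m := mul_le_mul_of_nonneg_left hm1 b3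
        linarith
      have step2 : (p + 1) * ((2:ℝ) ^ (p - 1) * m + m) ≤ C * m := by
        rw [hC]
        have hfactor : (p + 1) * ((2:ℝ) ^ (p - 1) + 1) ≤ (p + q + 2) * ((2:ℝ) ^ p + 2) := by
          nlinarith
        calc (p + 1) * ((2:ℝ) ^ (p - 1) * m + m)
            = ((p + 1) * ((2:ℝ) ^ (p - 1) + 1)) * m := by ring
          _ ≤ ((p + q + 2) * ((2:ℝ) ^ p + 2)) * m :=
            mul_le_mul_of_nonneg_right hfactor hm0
      linarith
    linarith
  · -- η-gradient
    set K1 : ℝ := (q + 1) * (‖η‖ + 2 * κ) ^ (q - 1) with hK1def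
    have hb0 : (0:ℝ) ≤ (‖η‖ + 2*κ) ^ (q - 1) := Real.rpow_nonneg (by linarith) _
    have hK10 : 0 ≤ K1 := by rw [hK1def]; positivity
    have hfd : ‖fderiv ℝ (fun y => bellQκ p n c κ (ζ, y)) η‖ ≤ K1 := by
      apply norm_fderiv_le_of_lip' ℝ hK10
      filter_upwards [Metric.closedBall_mem_nhds η hκ] with w hw
      rw [Metric.mem_closedBall, dist_eq_norm] at hw
      rw [Real.norm_eq_abs]
      exact diff_bound_v hp hq hδ n hc.le hκ hκ1 hnorm ζ η w hw
    have hKC : K1 ≤ C * (‖η‖ + κ) ^ (q - 1) := by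
      have hnk : (0:ℝ) ≤ (‖η‖ + κ) ^ (q - 1) := Real.rpow_nonneg (by linarith) _
      have b1 : (‖η‖ + 2 * κ) ^ (q - 1) ≤ (2:ℝ) ^ (q - 1) * (‖η‖ + κ) ^ (q - 1) := by
        have e1 : ‖η‖ + 2 * κ ≤ 2 * (‖η‖ + κ) := by linarith
        calc (‖η‖ + 2 * κ) ^ (q - 1) ≤ (2 * (‖η‖ + κ)) ^ (q - 1) :=
              Real.rpow_le_rpow (by linarith) e1 (by linarith)
          _ = (2:ℝ) ^ (q - 1) * (‖η‖ + κ) ^ (q - 1) :=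
              Real.mul_rpow (by norm_num) (by linarith)
      have b2 : (2:ℝ) ^ (q - 1) ≤ (2:ℝ) ^ p :=
        Real.rpow_le_rpow_of_exponent_le one_le_two (by linarith)
      have b3 : (0:ℝ) ≤ (2:ℝ) ^ (q - 1) := Real.rpow_nonneg (by norm_num) _
      have hfactor : (q + 1) * (2:ℝ) ^ (q - 1) ≤ (p + q + 2) * ((2:ℝ) ^ p + 2) := by
        nlinarith
      calc K1 ≤ (q + 1) * ((2:ℝ) ^ (q - 1) * (‖η‖ + κ) ^ (q - 1)) := by
            rw [hK1def]
            exact mul_le_mul_of_nonneg_left b1 (by linarith)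
        _ = ((q + 1) * (2:ℝ) ^ (q - 1)) * (‖η‖ + κ) ^ (q - 1) := by ring
        _ ≤ ((p + q + 2) * ((2:ℝ) ^ p + 2)) * (‖η‖ + κ) ^ (q - 1) :=
            mul_le_mul_of_nonneg_right hfactor hnk
        _ = C * (‖η‖ + κ) ^ (q - 1) := by rw [hC]
    linarith
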